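/- Let g(y) := (1 - e^{-y^2})/y for y > 0 (with g(0) := 0). Then for all y ≥ 0, g(y) ≤ 1/√2. -/

import Mathlib

noncomputable def g (y : ℝ) : ℝ := if y = 0 then 0 else (1 - Real.exp (-y^2)) / y

lemma key_aux (x : ℝ) (hx : 0 ≤ x) : (2 - x) * Real.exp x ≤ 2 + x := by
  have hder : ∀ t : ℝ, HasDerivAt (fun s => 2 + s - (2 - s) * Real.exp s)
      (1 - (1 - t) * Real.exp t) t := by
    intro t
    have h1 : HasDerivAt (fun s : ℝ => (2 - s) * Real.exp s)
        ((-1) * Real.exp t + (2 - t) * Real.exp t) t :=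
      ((hasDerivAt_id t).const_sub 2).mul (Real.hasDerivAt_exp t)
    have h2 : HasDerivAt (fun s : ℝ => 2 + s) 1 t := (hasDerivAt_id t).const_add 2
    have := h2.sub h1
    convert this using 1
    exacts [rfl, rfl, rfl, by ring]
  have mono : MonotoneOn (fun s => 2 + s - (2 - s) * Real.exp s) (Set.Ici (0:ℝ)) := by
    apply monotoneOn_of_deriv_nonneg (convex_Ici 0)
    · exact Continuous.continuousOn (by continuity)
    · intro t _
      exact (hder t).differentiableAt.differentiableWithinAt
    · intro t ht
      rw [interior_Ici] at ht
      rw [(hder t).deriv]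
      have h1 : 1 - t ≤ Real.exp (-t) := by
        have := Real.add_one_le_exp (-t); linarith
    
      have h2 : Real.exp (-t) * Real.exp t = 1 := by
        rw [← Real.exp_add]; simp
      nlinarith [Real.exp_pos t]
  have h0 : (0:ℝ) ∈ Set.Ici (0:ℝ) := Set.mem_Ici.mpr le_rfl
  have := mono h0 (Set.mem_Ici.mpr hx) hx
  simp only [Real.exp_zero] at this
  linarith

theorem g_le_inv_sqrt_two : ∀ y : ℝ, 0 ≤ y → g y ≤ 1 / Real.sqrt 2 := by
  intro y hy
  have hs : Real.sqrt 2 > 0 := Real.sqrt_pos.mpr (by norm_num)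
  have hs2 : Real.sqrt 2 ^ 2 = 2 := Real.sq_sqrt (by norm_num)
  rcases eq_or_lt_of_le hy with h | h
  · simp [g, ← h]
  · rw [g, if_neg (ne_of_gt h)]
    set A := Real.exp (-y^2) with hA
    have hApos : 0 < A := Real.exp_pos _
    have hEA : A * Real.exp (y^2) = 1 := by
      rw [hA, ← Real.exp_add]; simp
    have hk := key_aux (y^2) (sq_nonneg y)
    -- (2 - y^2) ≤ (2 + y^2) * A
    have hA2 : (2 - y^2) ≤ (2 + y^2) * A := by
      nlinarith [Real.exp_pos (y^2)]
    rw [div_le_div_iff₀ h hs]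
    nlinarith [sq_nonneg (y - Real.sqrt 2), mul_pos h hs,
      mul_nonneg (mul_nonneg hy hs.le) (sq_nonneg (y - Real.sqrt 2)),
      mul_nonneg hs.le (sq_nonneg (y - Real.sqrt 2)), hA2, hApos.le]
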